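/- A laminar family of odd subsets of an n-element set V, each subset of size at least 3 and at most |V|-3, has at most n/2 members. -/

import Mathlib

/-- A family of sets is laminar if any two members are disjoint or nested. -/
def Laminar {V : Type*} [DecidableEq V] (F : Finset (Finset V)) : Prop :=
  ∀ X ∈ F, ∀ Y ∈ F, X ∩ Y = ∅ ∨ X ⊆ Y ∨ Y ⊆ X

section aux
variable {V : Type*} [DecidableEq V]

lemma laminar_subset {F G : Finset (Finset V)} (h : G ⊆ F) (hF : Laminar F) : Laminar G :=
  fun X hX Y hY => hF X (h hX) Y (h hY)

lemma exists_max_above (F : Finset (Finset V)) (hlam : Laminar F)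
    (hne : ∀ S ∈ F, S.Nonempty) {X : Finset V} (hX : X ∈ F) :
    ∃ M, M ∈ F ∧ X ⊆ M ∧ ∀ Z ∈ F, ¬ M ⊂ Z := by
  obtain ⟨m, hm, hmax⟩ : ∃ m ∈ F.filter (fun Y => X ⊆ Y), ∀ x ∈ F.filter (fun Y => X ⊆ Y), ¬ m < x := by
    obtain ⟨m, hm⟩ := Finset.exists_maximal (s := F.filter (fun Y => X ⊆ Y)) ⟨X, by simp [hX]⟩
    exact ⟨m, hm.1, fun x hx hlt => (lt_iff_le_not_ge.mp hlt).2 (hm.2 hx hlt.le)⟩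
  simp only [Finset.mem_filter] at hm
  refine ⟨m, hm.1, hm.2, ?_⟩
  intro Z hZ hcon
  rcases hlam m hm.1 Z hZ with h | h | h
  · have hmZ : m ∩ Z = m := Finset.inter_eq_left.mpr hcon.subset
    rw [hmZ] at h
    obtain ⟨x, hx⟩ := hne m hm.1
    simp [h] at hx
  · exact hmax Z (Finset.mem_filter.mpr ⟨hZ, hm.2.trans h⟩) hcon
  · exact hcon.not_subset h

/-- the set of maximal members of `F` -/
noncomputable def maxSets (F : Finset (Finset V)) : Finset (Finset V) :=
  haveI := Classical.dec
  F.filter (fun Y => ∀ Z ∈ F, ¬ Y ⊂ Z)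

lemma mem_maxSets {F : Finset (Finset V)} {M : Finset V} :
    M ∈ maxSets F ↔ M ∈ F ∧ ∀ Z ∈ F, ¬ M ⊂ Z := by
  classical
  simp [maxSets]

lemma cover_card (F : Finset (Finset V)) (hlam : Laminar F)
    (hne : ∀ S ∈ F, S.Nonempty) :
    F.card ≤ ∑ M ∈ maxSets F, (F.filter (· ⊆ M)).card := by
  classical
  have hsub : F ⊆ (maxSets F).biUnion (fun M => F.filter (· ⊆ M)) := by
    intro X hX
    obtain ⟨M, hM, hXM, hmax⟩ := exists_max_above F hlam hne hX
    exact Finset.mem_biUnion.mpr ⟨M, mem_maxSets.mpr ⟨hM, hmax⟩,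
      Finset.mem_filter.mpr ⟨hX, hXM⟩⟩
  calc F.card ≤ ((maxSets F).biUnion (fun M => F.filter (· ⊆ M))).card :=
        Finset.card_le_card hsub
    _ ≤ ∑ M ∈ maxSets F, (F.filter (· ⊆ M)).card := Finset.card_biUnion_le

lemma maxSets_disjoint (F : Finset (Finset V)) (hlam : Laminar F)
    (hne : ∀ S ∈ F, S.Nonempty) :
    ∀ M ∈ maxSets F, ∀ M' ∈ maxSets F, M ≠ M' → Disjoint M M' := by
  intro M hM M' hM' hMM'
  rw [mem_maxSets] at hM hM'
  rcases hlam M hM.1 M' hM'.1 with h | h | h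
  · exact Finset.disjoint_iff_inter_eq_empty.mpr h
  · exact absurd (HasSubset.Subset.ssubset_of_ne h hMM') (hM.2 M' hM'.1)
  · exact absurd (HasSubset.Subset.ssubset_of_ne h hMM'.symm) (hM'.2 M hM.1)

lemma sum_maxSets_card (F : Finset (Finset V)) (hlam : Laminar F)
    (hne : ∀ S ∈ F, S.Nonempty) :
    ∑ M ∈ maxSets F, M.card = ((maxSets F).biUnion id).card :=
  (Finset.card_biUnion (maxSets_disjoint F hlam hne)).symm

lemma rooted : ∀ (n : ℕ) (G : Finset (Finset V)), G.card ≤ n → Laminar G →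
    (∀ S ∈ G, Odd S.card) → (∀ S ∈ G, 3 ≤ S.card) →
    ∀ M ∈ G, (∀ X ∈ G, X ⊆ M) → 2 * G.card + 1 ≤ M.card := by
  intro n
  induction n with
  | zero =>
    intro G hG _ _ _ M hM _
    rw [Nat.le_zero, Finset.card_eq_zero] at hG
    simp [hG] at hM
  | succ n ih =>
    intro G hG hlam hodd hlow M hM hsub
    classical
    have hne : ∀ S ∈ G, S.Nonempty := fun S hS =>
      Finset.card_pos.mp (lt_of_lt_of_le (by norm_num) (hlow S hS))
    set G' := G.erase M with hG'def
    have hcard : G.card = G'.card + 1 := by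
      rw [hG'def, Finset.card_erase_of_mem hM]
      have : 0 < G.card := Finset.card_pos.mpr ⟨M, hM⟩
      omega
    by_cases hGne : G'.Nonempty
    · -- nontrivial case
      have hG'sub : G' ⊆ G := Finset.erase_subset _ _
      have hlam' : Laminar G' := laminar_subset hG'sub hlam
      have hne' : ∀ S ∈ G', S.Nonempty := fun S hS => hne S (hG'sub hS)
      set Mx := maxSets G' with hMx
      -- each maximal bucket
      have hbucket : ∀ M' ∈ Mx, 2 * (G'.filter (· ⊆ M')).card + 1 ≤ M'.card := by
        intro M' hM'
        have hM'G' : M' ∈ G' := (mem_maxSets.mp hM').1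
        refine ih (G'.filter (· ⊆ M')) ?_ (laminar_subset (Finset.filter_subset _ _) hlam')
          (fun S hS => hodd S (hG'sub (Finset.mem_of_mem_filter S hS)))
          (fun S hS => hlow S (hG'sub (Finset.mem_of_mem_filter S hS)))
          M' (Finset.mem_filter.mpr ⟨hM'G', subset_refl _⟩)
          (fun X hX => (Finset.mem_filter.mp hX).2)
        calc (G'.filter (· ⊆ M')).card ≤ G'.card := Finset.card_le_card (Finset.filter_subset _ _)
          _ ≤ n := by omega
      -- counting
      have hcover := cover_card G' hlam' hne'
      rw [← hMx] at hcover
      have hsum1 : 2 * G'.card + Mx.card ≤ ∑ M' ∈ Mx, M'.card := by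
        calc 2 * G'.card + Mx.card ≤ 2 * (∑ M' ∈ Mx, (G'.filter (· ⊆ M')).card) + Mx.card := by
              omega
          _ = ∑ M' ∈ Mx, (2 * (G'.filter (· ⊆ M')).card + 1) := by
              rw [Finset.sum_add_distrib, Finset.mul_sum, Finset.sum_const, smul_eq_mul, mul_one]
          _ ≤ ∑ M' ∈ Mx, M'.card := Finset.sum_le_sum hbucket
      have hsumcard := sum_maxSets_card G' hlam' hne'
      have hsumle : ∑ M' ∈ Mx, M'.card ≤ M.card := by
        rw [hsumcard]
        apply Finset.card_le_card
        intro x hx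
        obtain ⟨M', hM', hxM'⟩ := Finset.mem_biUnion.mp hx
        exact hsub M' (hG'sub (mem_maxSets.mp hM').1) hxM'
      have hparity : (∑ M' ∈ Mx, M'.card) % 2 = Mx.card % 2 := by
        rw [Finset.sum_nat_mod]
        congr 1
        calc ∑ M' ∈ Mx, M'.card % 2 = ∑ _M' ∈ Mx, 1 := by
              apply Finset.sum_congr rfl
              intro M' hM'
              exact Nat.odd_iff.mp (hodd M' (hG'sub (mem_maxSets.mp hM').1))
          _ = Mx.card := by simp
      have hMxne : Mx.Nonempty := by
        obtain ⟨X, hX⟩ := hGne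
        obtain ⟨M', hM', _, hmax⟩ := exists_max_above G' hlam' hne' hX
        exact ⟨M', mem_maxSets.mpr ⟨hM', hmax⟩⟩
      have hMxpos : 1 ≤ Mx.card := Finset.card_pos.mpr hMxne
      have hone : Mx.card = 1 → (∑ M' ∈ Mx, M'.card) < M.card := by
        intro h1
        obtain ⟨M', hM'⟩ := Finset.card_eq_one.mp h1
        rw [hM', Finset.sum_singleton]
        have hM'Mx : M' ∈ Mx := by rw [hM']; exact Finset.mem_singleton_self _
        have hM'G' : M' ∈ G' := (mem_maxSets.mp hM'Mx).1
        apply Finset.card_lt_card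
        exact HasSubset.Subset.ssubset_of_ne (hsub M' (hG'sub hM'G'))
          (Finset.ne_of_mem_erase hM'G')
      have hModd : M.card % 2 = 1 := Nat.odd_iff.mp (hodd M hM)
      omega
    · -- G = {M}
      have : G'.card = 0 := by
        rw [Finset.card_eq_zero]
        exact Finset.not_nonempty_iff_eq_empty.mp hGne
      have h3 := hlow M hM
      omega

end aux

/-- a laminar family of odd subsets of an `n`-element set, each of
size at least `3` and at most `n - 3`, has at most `n / 2` members. -/
theorem laminar_odd_family_card_le
    {V : Type*} [Fintype V] [DecidableEq V] (F : Finset (Finset V))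
    (hlam : Laminar F)
    (hodd : ∀ S ∈ F, Odd S.card)
    (hlow : ∀ S ∈ F, 3 ≤ S.card)
    (hhigh : ∀ S ∈ F, S.card ≤ Fintype.card V - 3) :
    2 * F.card ≤ Fintype.card V := by
  classical
  have hne : ∀ S ∈ F, S.Nonempty := fun S hS =>
    Finset.card_pos.mp (lt_of_lt_of_le (by norm_num) (hlow S hS))
  have hbucket : ∀ M ∈ maxSets F, 2 * (F.filter (· ⊆ M)).card + 1 ≤ M.card := by
    intro M hM
    have hMF : M ∈ F := (mem_maxSets.mp hM).1
    exact rooted F.card (F.filter (· ⊆ M))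
      (Finset.card_le_card (Finset.filter_subset _ _))
      (laminar_subset (Finset.filter_subset _ _) hlam)
      (fun S hS => hodd S (Finset.mem_of_mem_filter S hS))
      (fun S hS => hlow S (Finset.mem_of_mem_filter S hS))
      M (Finset.mem_filter.mpr ⟨hMF, subset_refl _⟩)
      (fun X hX => (Finset.mem_filter.mp hX).2)
  have hcover := cover_card F hlam hne
  have hsum1 : 2 * F.card + (maxSets F).card ≤ ∑ M ∈ maxSets F, M.card := by
    calc 2 * F.card + (maxSets F).card
        ≤ 2 * (∑ M ∈ maxSets F, (F.filter (· ⊆ M)).card) + (maxSets F).card := by omega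
      _ = ∑ M ∈ maxSets F, (2 * (F.filter (· ⊆ M)).card + 1) := by
          rw [Finset.sum_add_distrib, Finset.mul_sum, Finset.sum_const, smul_eq_mul, mul_one]
      _ ≤ ∑ M ∈ maxSets F, M.card := Finset.sum_le_sum hbucket
  have hsumcard := sum_maxSets_card F hlam hne
  have hle : ∑ M ∈ maxSets F, M.card ≤ Fintype.card V := by
    rw [hsumcard]
    exact Finset.card_le_univ _
  omega
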